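/- Let $0 < p, q < 1$ be real numbers with $p + q < 1$. If $z, w$ are complex numbers such that $|z - (1-p)| \le p$ and $|w - (1-q)| \le q$, then $|zw - (1-p-q)| \le p+q$. -/

import Mathlib

theorem stmt0 (p q : ℝ) (hp0 : 0 < p) (hp1 : p < 1) (hq0 : 0 < q) (hq1 : q < 1)
    (hpq : p + q < 1) (z w : ℂ)
    (hz : ‖z - (1 - p)‖ ≤ p) (hw : ‖w - (1 - q)‖ ≤ q) :
    ‖z * w - (1 - p - q)‖ ≤ p + q := by
  have key : z * w - (1 - (p:ℂ) - q) =
      (z - (1 - p)) * w + (1 - p) * (w - (1 - q)) + p * q := by ring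
  have hwabs : ‖w‖ ≤ 1 := by
    calc ‖w‖ = ‖(w - (1 - q)) + (1 - q)‖ := by ring_nf
    _ ≤ ‖w - (1 - q)‖ + ‖(1:ℂ) - q‖ := norm_add_le _ _
    _ ≤ q + (1 - q) := by
        gcongr
        rw [show ((1:ℂ) - q) = ((1 - q : ℝ) : ℂ) by push_cast; ring,
          Complex.norm_real, Real.norm_eq_abs, abs_of_nonneg (by linarith)]
    _ = 1 := by ring
  calc ‖z * w - (1 - p - q)‖
      = ‖(z - (1 - p)) * w + (1 - p) * (w - (1 - q)) + p * q‖ := by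
        push_cast; rw [key]
    _ ≤ ‖(z - (1 - p)) * w + (1 - p) * (w - (1 - q))‖ + ‖(p:ℂ) * q‖ :=
        norm_add_le _ _
    _ ≤ ‖(z - (1 - p)) * w‖ + ‖(1 - (p:ℂ)) * (w - (1 - q))‖
        + ‖(p:ℂ) * q‖ := by gcongr; exact norm_add_le _ _
    _ = ‖z - (1 - p)‖ * ‖w‖
        + ‖(1:ℂ) - p‖ * ‖w - (1 - q)‖ + ‖(p:ℂ) * q‖ := by
        rw [norm_mul, norm_mul]
    _ ≤ p * 1 + (1 - p) * q + p * q := by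
        have h1 : ‖(1:ℂ) - p‖ = 1 - p := by
          rw [show ((1:ℂ) - p) = ((1 - p : ℝ) : ℂ) by push_cast; ring,
            Complex.norm_real, Real.norm_eq_abs, abs_of_nonneg (by linarith)]
        have h2 : ‖(p:ℂ) * q‖ = p * q := by
          rw [norm_mul, Complex.norm_real, Complex.norm_real, Real.norm_eq_abs, Real.norm_eq_abs,
            abs_of_pos hp0, abs_of_pos hq0]
        rw [h1, h2]
        gcongr <;> first | linarith | exact hwabs
    _ = p + q := by ring
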